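/- Let q ≥ 2 and let X be a (q²+q+1)×(q²+q+1) real matrix with entries in {0,1} satisfying X·1 = (q+1)·1, Xᵀ·1 = (q+1)·1, XᵀX = q·I + J and X·Xᵀ = q·I + J (the incidence matrix of a projective plane of order q). Let S be a set of exactly q+2 columns such that every row of X contains at most two ones among the columns of S (a hyperoval). Let R be the set of rows of X that contain no ones among the columns of S (exterior blocks), and let T be the set of columns not in S. Then |R| = q(q−1)/2, the submatrix Y = X[R, T] satisfies Y·Yᵀ = q·I + J (any two distinct exterior blocks meet in exactly one vertex, which lies outside S), and Yᵀ·1 = (q/2)·1 (every vertex outside S lies on exactly q/2 exterior blocks). In particular Yᵀ is the incidence matrix of a BIBD(q(q−1)/2, q/2, 1). -/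

import Mathlib

open Matrix in
open Classical in
/-- Let `S` be a hyperoval in a projective plane of order `q`. Let `R` be the set of
exterior blocks (rows with no ones among the columns of `S`) and `T` the set of vertices
outside `S`. Then `|R| = q(q−1)/2`, and the submatrix `Y = X[R,T]` satisfies
`YYᵀ = qI + J` and has column sums `q/2`; i.e. `Yᵀ` is the incidence matrix of a
`BIBD(q(q−1)/2, q/2, 1)` (a Denniston design). -/
theorem hyperoval_exterior_blocks (q : ℕ) (hq : 2 ≤ q)
    (X : Matrix (Fin (q ^ 2 + q + 1)) (Fin (q ^ 2 + q + 1)) ℝ)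
    (h01 : ∀ i j, X i j = 0 ∨ X i j = 1)
    (hrow : X *ᵥ 1 = ((q : ℝ) + 1) • 1)
    (hcol : Xᵀ *ᵥ 1 = ((q : ℝ) + 1) • 1)
    (hgram : Xᵀ * X = (q : ℝ) • 1 + Matrix.of fun _ _ => 1)
    (hgram' : X * Xᵀ = (q : ℝ) • 1 + Matrix.of fun _ _ => 1)
    (S : Finset (Fin (q ^ 2 + q + 1))) (hcard : S.card = q + 2)
    (hhyp : ∀ i, ∑ j ∈ S, X i j ≤ 2) :
    Nat.card {i // ∑ j ∈ S, X i j = 0} = q * (q - 1) / 2 ∧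
    (let Y : Matrix {i // ∑ j ∈ S, X i j = 0} {j // j ∉ S} ℝ :=
        Matrix.of fun i j => X i.1 j.1
     (Y * Yᵀ = (q : ℝ) • 1 + Matrix.of fun _ _ => (1 : ℝ)) ∧
       (Yᵀ *ᵥ 1 = ((q : ℝ) / 2) • 1)) := by
  classical
  have hX0 : ∀ i j, (0:ℝ) ≤ X i j := fun i j => by rcases h01 i j with h|h <;> simp [h]
  set s : Fin (q ^ 2 + q + 1) → ℝ := fun i => ∑ j ∈ S, X i j with hs
  have hs0 : ∀ i, 0 ≤ s i := fun i => Finset.sum_nonneg fun j _ => hX0 i j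
  have hrow' : ∀ i, ∑ j, X i j = (q:ℝ)+1 := by
    intro i
    have := congrFun hrow i
    simpa [Matrix.mulVec, dotProduct] using this
  have hcol' : ∀ j, ∑ i, X i j = (q:ℝ)+1 := by
    intro j
    have := congrFun hcol j
    simpa [Matrix.mulVec, dotProduct, Matrix.transpose_apply] using this
  have hgram1 : ∀ j k, ∑ i, X i j * X i k = (q:ℝ) * (if j = k then 1 else 0) + 1 := by
    intro j k
    have := congrFun (congrFun hgram j) k
    simpa [Matrix.mul_apply, Matrix.transpose_apply, Matrix.one_apply] using this
  have hgram'1 : ∀ i i', ∑ j, X i j * X i' j = (q:ℝ) * (if i = i' then 1 else 0) + 1 := by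
    intro i i'
    have := congrFun (congrFun hgram' i) i'
    simpa [Matrix.mul_apply, Matrix.transpose_apply, Matrix.one_apply] using this
  -- total sums
  have hsum_s : ∑ i, s i = ((q:ℝ)+2)*((q:ℝ)+1) := by
    simp only [hs]; refine Finset.sum_comm.trans ?_
    rw [Finset.sum_congr rfl fun j _ => hcol' j]
    simp [hcard]
    ring
  have hsum_s2 : ∑ i, s i * s i = ((q:ℝ)+2)*(2*(q:ℝ)+2) := by
    have e1 : ∀ i, s i * s i = ∑ j ∈ S, ∑ k ∈ S, X i j * X i k := by
      intro i
      rw [hs, Finset.sum_mul_sum]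
    rw [Finset.sum_congr rfl fun i _ => e1 i]
    rw [Finset.sum_comm]
    have e2 : ∀ j, ∑ i, ∑ k ∈ S, X i j * X i k = ∑ k ∈ S, ∑ i, X i j * X i k :=
      fun j => Finset.sum_comm
    rw [Finset.sum_congr rfl fun j _ => e2 j]
    have e3 : ∀ j ∈ S, ∑ k ∈ S, ∑ i, X i j * X i k = (q:ℝ) + (q+2) := by
      intro j hj
      rw [Finset.sum_congr rfl fun k _ => hgram1 j k]
      rw [Finset.sum_add_distrib, ← Finset.mul_sum, Finset.sum_ite_eq]
      simp [hj, hcard]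
    rw [Finset.sum_congr rfl e3]
    simp [hcard]
    ring
  -- every row meets S in 0 or 2 points
  have key : ∀ i, s i = 0 ∨ s i = 2 := by
    have hnn : ∀ i, 0 ≤ s i * (2 - s i) := fun i =>
      mul_nonneg (hs0 i) (by linarith [hhyp i])
    have hzero : ∑ i, s i * (2 - s i) = 0 := by
      have e : ∑ i, s i * (2 - s i) = 2 * (∑ i, s i) - ∑ i, s i * s i := by
        rw [Finset.mul_sum, ← Finset.sum_sub_distrib]
        exact Finset.sum_congr rfl fun i _ => by ring
      rw [e, hsum_s, hsum_s2]; ring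
    intro i
    have h := (Finset.sum_eq_zero_iff_of_nonneg (fun i _ => hnn i)).mp hzero i
      (Finset.mem_univ i)
    rcases mul_eq_zero.mp h with h|h
    · exact Or.inl h
    · exact Or.inr (by linarith)
  have hSentry : ∀ i, s i = 0 → ∀ j ∈ S, X i j = 0 := by
    intro i hi j hj
    exact (Finset.sum_eq_zero_iff_of_nonneg (fun j _ => hX0 i j)).mp hi j hj
  set A : Finset (Fin (q ^ 2 + q + 1)) := Finset.univ.filter (fun i => s i = 0) with hA
  -- cardinality of A
  have hBsum : (2:ℝ) * (Finset.univ.filter (fun i => ¬ s i = 0)).card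
      = ((q:ℝ)+2)*((q:ℝ)+1) := by
    have := Finset.sum_filter_add_sum_filter_not Finset.univ (fun i => s i = 0) s
    have hA0 : ∑ i ∈ Finset.univ.filter (fun i => s i = 0), s i = 0 :=
      Finset.sum_eq_zero fun i hi => (Finset.mem_filter.mp hi).2
    have hB2 : ∑ i ∈ Finset.univ.filter (fun i => ¬ s i = 0), s i
        = 2 * (Finset.univ.filter (fun i => ¬ s i = 0)).card := by
      have h2 : ∀ i ∈ Finset.univ.filter (fun i => ¬ s i = 0), s i = 2 := fun i hi =>
        (key i).resolve_left (Finset.mem_filter.mp hi).2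
      rw [Finset.sum_congr rfl h2, Finset.sum_const, nsmul_eq_mul, mul_comm]
    rw [hA0, hB2] at this
    rw [← hsum_s, ← this]
    ring
  have hBcard : 2 * (Finset.univ.filter (fun i => ¬ s i = 0)).card = (q+2)*(q+1) := by
    exact_mod_cast hBsum
  have hABcard : A.card + (Finset.univ.filter (fun i => ¬ s i = 0)).card
      = q ^ 2 + q + 1 := by
    rw [hA, Finset.card_filter_add_card_filter_not]
    simp
  have hAcard : A.card = q * (q - 1) / 2 := by
    have e2 : (q+2)*(q+1) = q*q + 3*q + 2 := by ring
    have e3 : q^2 + q + 1 = q*q + q + 1 := by ring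
    rw [e2] at hBcard
    have hAB' := hABcard.trans e3
    have e1 : q*(q-1) = q*q - q := by rw [Nat.mul_sub, mul_one]
    rw [e1]
    generalize hm : q*q = m at hBcard hAB'
    omega
  have hNatCard : Nat.card {i // ∑ j ∈ S, X i j = 0} = q * (q - 1) / 2 := by
    rw [Nat.card_eq_fintype_card]
    rw [Fintype.card_subtype]
    convert hAcard using 2
  refine ⟨hNatCard, ?_, ?_⟩
  · -- Y * Yᵀ = q • 1 + J
    ext i i'
    have hsub : ∀ f : Fin (q^2+q+1) → ℝ,
        (∑ j : {j // j ∉ S}, f j.1) = ∑ j ∈ Sᶜ, f j := by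
      intro f
      exact (Finset.sum_subtype Sᶜ (fun x => Finset.mem_compl) f).symm
    have hSzero : ∑ j ∈ S, X i.1 j * X i'.1 j = 0 :=
      Finset.sum_eq_zero fun j hj => by rw [hSentry i.1 i.2 j hj, zero_mul]
    have hcompl : ∑ j ∈ Sᶜ, X i.1 j * X i'.1 j
        = (q:ℝ) * (if i.1 = i'.1 then 1 else 0) + 1 := by
      have := Finset.sum_add_sum_compl S (fun j => X i.1 j * X i'.1 j)
      rw [hSzero, zero_add] at this
      rw [this, hgram'1]
    rw [Matrix.mul_apply]
    simp only [Matrix.transpose_apply, Matrix.of_apply]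
    rw [hsub (fun j => X i.1 j * X i'.1 j), hcompl]
    simp only [Matrix.add_apply, Matrix.smul_apply, Matrix.one_apply, Matrix.of_apply,
      smul_eq_mul]
    congr 2
    simp [Subtype.ext_iff]
  · -- column sums
    ext j
    have hj : j.1 ∉ S := j.2
    have hsXj : ∑ i, s i * X i j.1 = (q:ℝ) + 2 := by
      have e1 : ∀ i, s i * X i j.1 = ∑ k ∈ S, X i k * X i j.1 := by
        intro i; rw [hs, Finset.sum_mul]
      rw [Finset.sum_congr rfl fun i _ => e1 i, Finset.sum_comm]
      have e2 : ∀ k ∈ S, ∑ i, X i k * X i j.1 = 1 := by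
        intro k hk
        rw [hgram1 k j.1]
        have : k ≠ j.1 := fun h => hj (h ▸ hk)
        simp [this]
      rw [Finset.sum_congr rfl e2]
      simp [hcard]
    have hXj : ∑ i, X i j.1 = (q:ℝ) + 1 := hcol' j.1
    have hfull : ∑ i, (2 - s i) * X i j.1 = (q:ℝ) := by
      have e : ∑ i, (2 - s i) * X i j.1
          = 2 * (∑ i, X i j.1) - ∑ i, s i * X i j.1 := by
        rw [Finset.mul_sum, ← Finset.sum_sub_distrib]
        exact Finset.sum_congr rfl fun i _ => by ring
      rw [e, hsXj, hXj]; ring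
    have hsplit : ∑ i, (2 - s i) * X i j.1 = ∑ i ∈ A, 2 * X i j.1 := by
      rw [← Finset.sum_filter_add_sum_filter_not Finset.univ (fun i => s i = 0)
        (fun i => (2 - s i) * X i j.1)]
      have hB0 : ∑ i ∈ Finset.univ.filter (fun i => ¬ s i = 0),
          (2 - s i) * X i j.1 = 0 := by
        refine Finset.sum_eq_zero fun i hi => ?_
        rcases key i with h|h
        · exact absurd h (Finset.mem_filter.mp hi).2
        · rw [h]; ring
      rw [hB0, add_zero, hA]
      refine Finset.sum_congr rfl fun i hi => ?_
      rw [(Finset.mem_filter.mp hi).2]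
      ring
    have hAsum : ∑ i ∈ A, X i j.1 = (q:ℝ) / 2 := by
      have : 2 * ∑ i ∈ A, X i j.1 = (q:ℝ) := by
        rw [Finset.mul_sum, ← hsplit, hfull]
      linarith
    have hsub : ∀ f : Fin (q^2+q+1) → ℝ,
        (∑ i : {i // ∑ j ∈ S, X i j = 0}, f i.1) = ∑ i ∈ A, f i := by
      intro f
      exact (Finset.sum_subtype A (fun x => by simp [hA, hs]) f).symm
    simp only [Matrix.mulVec, dotProduct, Matrix.transpose_apply, Matrix.of_apply,
      Pi.one_apply, mul_one, Pi.smul_apply, smul_eq_mul]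
    rw [hsub (fun i => X i j.1), hAsum]
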